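/- Let R be a UFD and let p₁, p₂ ∈ qt(R)^× and Q₁, Q₂ ∈ qt(R)[y] with deg Q₁ ≥ 1, deg Q₂ ≥ 2, Q₁(0) = Q₂(0) = 0, Q₁ ∈ R[y], p₁ ∈ R with gcd(p₁, content of Q₁) = 1, and F(x,y) = p₂·y + Q₂(p₁·x + Q₁(y)) ∈ R[x,y]. Then p₁·p₂ ∈ R. -/
import Mathlib


open MvPolynomial

/-- For a reduced quadruplet `(p₁,p₂,Q₁,Q₂)` over a UFD `R` with
`F = p₂y + Q₂(p₁x+Q₁(y)) ∈ R[x,y]`, the product `p₁p₂` lies in `R`. -/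
theorem reduced_quadruplet_product_in_ring (R : Type*) [CommRing R] [IsDomain R]
    [UniqueFactorizationMonoid R]
    (p₁ p₂ : FractionRing R) (Q₁ Q₂ : Polynomial (FractionRing R))
    (hp₁ : p₁ ≠ 0) (hp₂ : p₂ ≠ 0)
    (hd₁ : 1 ≤ Q₁.natDegree) (hd₂ : 2 ≤ Q₂.natDegree)
    (h₁0 : Q₁.eval 0 = 0) (h₂0 : Q₂.eval 0 = 0)
    (r₁ : R) (hr₁ : algebraMap R (FractionRing R) r₁ = p₁)
    (P₁ : Polynomial R) (hP₁ : P₁.map (algebraMap R (FractionRing R)) = Q₁)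
    (hgcd : ∀ t : R, t ∣ r₁ → (∀ i, t ∣ P₁.coeff i) → IsUnit t)
    (F₀ : MvPolynomial (Fin 2) R)
    (hF₀ : MvPolynomial.map (algebraMap R (FractionRing R)) F₀ =
      C p₂ * X 1 + Polynomial.aeval (C p₁ * X 0 + Polynomial.aeval (X 1) Q₁) Q₂) :
    ∃ r : R, algebraMap R (FractionRing R) r = p₁ * p₂ := by
  classical
  have hu1 : pderiv (σ := Fin 2) (R := FractionRing R) 1
      (C p₁ * X 0 + Polynomial.aeval (X 1) Q₁)
      = Polynomial.aeval (X 1) Q₁.derivative := by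
    rw [map_add, pderiv_C_mul, Derivation.map_aeval]
    simp [Pi.single_apply]
  have hu0 : pderiv (σ := Fin 2) (R := FractionRing R) 0
      (C p₁ * X 0 + Polynomial.aeval (X 1) Q₁) = C p₁ := by
    rw [map_add, pderiv_C_mul, Derivation.map_aeval]
    simp [Pi.single_apply]
  have haev : MvPolynomial.map (algebraMap R (FractionRing R))
      (Polynomial.aeval (X (σ := Fin 2) 1) P₁.derivative)
      = Polynomial.aeval (X (σ := Fin 2) (R := FractionRing R) 1) Q₁.derivative := by
    rw [← hP₁, Polynomial.derivative_map]
    induction P₁.derivative using Polynomial.induction_on' with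
    | add p q hp hq => simp [hp, hq]
    | monomial n a => simp [Polynomial.aeval_monomial, Polynomial.map_monomial,
        algebraMap_eq]
  have hmapG : MvPolynomial.map (algebraMap R (FractionRing R))
      (MvPolynomial.C r₁ * pderiv 1 F₀
        - Polynomial.aeval (X 1) P₁.derivative * pderiv 0 F₀)
      = C (p₁ * p₂) := by
    rw [map_sub, map_mul, map_mul, ← pderiv_map, ← pderiv_map, hF₀,
      MvPolynomial.map_C, hr₁]
    rw [haev]
    rw [map_add, map_add, Derivation.map_aeval, Derivation.map_aeval, hu0, hu1]
    simp only [map_mul, pderiv_X, pderiv_C, Pi.single_apply]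
    norm_num
    ring
  refine ⟨MvPolynomial.coeff 0 (MvPolynomial.C r₁ * pderiv 1 F₀
    - Polynomial.aeval (X 1) P₁.derivative * pderiv 0 F₀), ?_⟩
  have h := congrArg (MvPolynomial.coeff 0) hmapG
  rwa [MvPolynomial.coeff_map, MvPolynomial.coeff_C, if_pos rfl] at h
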